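/- For every k ≥ 1 and all integers i, j ≥ 1, the element ζ(c_i, c_j) lies in L_k. (The key claim established in the proof of Lemma 3.3(iii) of the paper.) -/

import Mathlib

namespace Paper

variable {G : Type*} [Group G]

/-- The paper's commutator `[a,b] = a⁻¹ b⁻¹ a b`. -/
def pc {G : Type*} [Group G] (a b : G) : G := a⁻¹ * b⁻¹ * a * b

/-- The left-normed iterated commutator `[a, x, (r)…, x]`. -/
def itc {G : Type*} [Group G] (x a : G) : ℕ → G
  | 0 => a
  | r + 1 => pc (itc x a r) x

/-- `c_i`, where `c_1 = y` and `c_{i+1} = [c_i, x]`; equivalently `c_i = [y, x, (i-1)…, x]`. -/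
def cc (x y : G) (i : ℕ) : G := itc x y (i - 1)

/-- `z_{m,n} = [c_m, c_n]`. -/
def zz (x y : G) (m n : ℕ) : G := pc (cc x y m) (cc x y n)

/-- `H = ⟨c_i : i ≥ 1⟩`. -/
def Hsub (x y : G) : Subgroup G :=
  Subgroup.closure {g | ∃ i, 1 ≤ i ∧ g = cc x y i}

/-- `Z = ⟨c_l², z_{m,n} : l, m, n ≥ 1⟩`. -/
def Zsub (x y : G) : Subgroup G :=
  Subgroup.closure ({g | ∃ l, 1 ≤ l ∧ g = cc x y l ^ 2} ∪
    {g | ∃ m n, 1 ≤ m ∧ 1 ≤ n ∧ g = zz x y m n})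

/-- `w_{i,j,k} = ∏_{t=1}^{2^k−1} [z_{i+t,j+t−1}, x, (2^k−1−t)…, x]`,
factors in order of increasing `t` (reindexed by `t ↦ t+1`). -/
def ww (x y : G) (i j k : ℕ) : G :=
  ((List.range (2 ^ k - 1)).map
    (fun t => itc x (zz x y (i + t + 1) (j + t)) (2 ^ k - 2 - t))).prod

/-- `L_k`, the normal closure of `{w_{i,j,k} : i,j ≥ 1} ∪ {z_{m,n} : m ≥ 2^k, n ≥ 1}`. -/
def Lsub (x y : G) (k : ℕ) : Subgroup G :=
  Subgroup.normalClosure ({g | ∃ i j, 1 ≤ i ∧ 1 ≤ j ∧ g = ww x y i j k} ∪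
    {g | ∃ m n, 2 ^ k ≤ m ∧ 1 ≤ n ∧ g = zz x y m n})

/-- `Q_k = ⟨c_l² : l ≥ 2^{k−1}⟩`. -/
def Qsub (x y : G) (k : ℕ) : Subgroup G :=
  Subgroup.closure {g | ∃ l, 2 ^ (k - 1) ≤ l ∧ g = cc x y l ^ 2}

/-- `d_k(h) = [h,x,(2^k−1)…,x]⁻¹ · x^{−2^k} · (xh)^{2^k}`. -/
def dd (x y : G) (k : ℕ) (h : G) : G :=
  (itc x h (2 ^ k - 1))⁻¹ * (x ^ 2 ^ k)⁻¹ * (x * h) ^ 2 ^ k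

/-- `Γ^{2^k} = ⟨g^{2^k} : g ∈ Γ⟩`. -/
def pow2Sub (G : Type*) [Group G] (k : ℕ) : Subgroup G :=
  Subgroup.closure {g | ∃ a : G, g = a ^ 2 ^ k}

/-- `ζ(h₁,h₂) = ∏_{ℓ=0}^{2^k−2} [h₁^x, x, (ℓ)…, x, h₂, x, (2^k−2−ℓ)…, x]`,
factors in order of increasing `ℓ`. -/
def zeta (x : G) (k : ℕ) (h₁ h₂ : G) : G :=
  ((List.range (2 ^ k - 1)).map
    (fun l => itc x (pc (itc x (x⁻¹ * h₁ * x) l) h₂) (2 ^ k - 2 - l))).prod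

section Part0

variable (x y : G)

theorem pc_one_left (a : G) : pc (1 : G) a = 1 := by simp [pc]

theorem pc_self (a : G) : pc a a = 1 := by simp [pc]

theorem pc_rev (a b : G) : pc b a = (pc a b)⁻¹ := by unfold pc; group

theorem conj_pc (g a b : G) : g⁻¹ * pc a b * g = pc (g⁻¹ * a * g) (g⁻¹ * b * g) := by
  unfold pc; group

theorem itc_one (r : ℕ) : itc x (1 : G) r = 1 := by
  induction r with
  | zero => rfl
  | succ r ih => rw [itc, ih, pc_one_left]

theorem itc_succ' (a : G) (r : ℕ) : itc x a (r + 1) = itc x (pc a x) r := by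
  induction r with
  | zero => rfl
  | succ r ih => rw [itc, ih, ← itc]

theorem itc_add (a : G) (p q : ℕ) : itc x a (p + q) = itc x (itc x a p) q := by
  induction q with
  | zero => rfl
  | succ q ih => rw [← Nat.add_assoc, itc, ih, ← itc]

theorem itc_conj (a : G) (r : ℕ) : itc x (x⁻¹ * a * x) r = x⁻¹ * itc x a r * x := by
  induction r with
  | zero => rfl
  | succ r ih =>
    rw [itc, ih, itc]
    unfold pc; group

theorem cc_succ_succ (i : ℕ) : cc x y (i + 2) = pc (cc x y (i + 1)) x := rfl

theorem itc_cc (i r : ℕ) : itc x (cc x y (i + 1)) r = cc x y (i + 1 + r) := by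
  induction r with
  | zero => rfl
  | succ r ih =>
    rw [itc, ih, show i + 1 + r = (i + r) + 1 from by omega,
      show i + 1 + (r + 1) = (i + r) + 2 from by omega, cc_succ_succ]

theorem cc_eq_max (i : ℕ) : cc x y i = cc x y (max i 1) := by
  unfold cc; congr 1; omega

theorem zz_diag (m : ℕ) : zz x y m m = 1 := pc_self _

theorem zz_rev (m n : ℕ) : zz x y n m = (zz x y m n)⁻¹ := pc_rev _ _

theorem cc_mem (i : ℕ) : cc x y i ∈ Hsub x y := by
  apply Subgroup.subset_closure
  exact ⟨max i 1, le_max_right _ _, cc_eq_max x y i⟩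

theorem zz_mem (m n : ℕ) : zz x y m n ∈ Zsub x y := by
  apply Subgroup.subset_closure
  refine Or.inr ⟨max m 1, max n 1, le_max_right _ _, le_max_right _ _, ?_⟩
  unfold zz; rw [cc_eq_max x y m, cc_eq_max x y n]

end Part0

section Part2

variable (x y : G)
variable (hca : ∀ z ∈ Zsub x y, ∀ h ∈ Hsub x y, z * h = h * z)
variable (hz2 : ∀ z ∈ Zsub x y, z ^ 2 = 1)

set_option linter.unusedSectionVars false

theorem conj_cc (i : ℕ) : x⁻¹ * cc x y (i + 1) * x = cc x y (i + 1) * cc x y (i + 2) := by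
  rw [cc_succ_succ]; unfold pc; group

include hca hz2

theorem zmul_self {z : G} (hz : z ∈ Zsub x y) : z * z = 1 := by
  rw [← sq]; exact hz2 z hz

theorem zinv {z : G} (hz : z ∈ Zsub x y) : z⁻¹ = z :=
  inv_eq_of_mul_eq_one_right (zmul_self x y hca hz2 hz)

theorem zcomm {z w : G} (hz : z ∈ Zsub x y) (hw : w ∈ Zsub x y) : z * w = w * z := by
  have h1 : (z * w)⁻¹ = z * w := zinv x y hca hz2 (mul_mem hz hw)
  calc z * w = (z * w)⁻¹ := h1.symm
    _ = w⁻¹ * z⁻¹ := mul_inv_rev _ _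
    _ = w * z := by rw [zinv x y hca hz2 hz, zinv x y hca hz2 hw]

theorem pc_mul_left {a b c : G} (hZ : pc a c ∈ Zsub x y) (hb : b ∈ Hsub x y) :
    pc (a * b) c = pc a c * pc b c := by
  have h1 : b⁻¹ * pc a c * b = pc a c := by
    have := hca _ hZ b hb
    rw [mul_assoc, this]; group
  calc pc (a * b) c = b⁻¹ * pc a c * b * pc b c := by unfold pc; group
    _ = pc a c * pc b c := by rw [h1]

theorem pc_mul_right {a c d : G} (hZ : pc a c ∈ Zsub x y) (hd : d ∈ Hsub x y) :
    pc a (c * d) = pc a d * pc a c := by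
  have h1 : d⁻¹ * pc a c * d = pc a c := by
    have := hca _ hZ d hd
    rw [mul_assoc, this]; group
  calc pc a (c * d) = pc a d * (d⁻¹ * pc a c * d) := by unfold pc; group
    _ = pc a d * pc a c := by rw [h1]

theorem pc_cc_ccmul (m n : ℕ) :
    pc (cc x y (m + 1)) (cc x y (n + 1) * cc x y (n + 2)) =
      zz x y (m + 1) (n + 2) * zz x y (m + 1) (n + 1) :=
  pc_mul_right x y hca hz2 (zz_mem x y _ _) (cc_mem x y _)

theorem conj_zz (m n : ℕ) :
    x⁻¹ * zz x y (m + 1) (n + 1) * x =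
      (zz x y (m + 1) (n + 2) * zz x y (m + 1) (n + 1)) *
        (zz x y (m + 2) (n + 2) * zz x y (m + 2) (n + 1)) := by
  have h0 : x⁻¹ * zz x y (m + 1) (n + 1) * x =
      pc (cc x y (m + 1) * cc x y (m + 2)) (cc x y (n + 1) * cc x y (n + 2)) := by
    rw [← conj_cc x y m, ← conj_cc x y n]
    exact conj_pc _ _ _
  rw [h0, pc_mul_left x y hca hz2, pc_cc_ccmul x y hca hz2, pc_cc_ccmul x y hca hz2]
  · rw [pc_cc_ccmul x y hca hz2]
    exact mul_mem (zz_mem x y _ _) (zz_mem x y _ _)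
  · exact cc_mem x y _

theorem pc_zz_x (m n : ℕ) :
    pc (zz x y (m + 1) (n + 1)) x =
      zz x y (m + 1) (n + 2) * (zz x y (m + 2) (n + 2) * zz x y (m + 2) (n + 1)) := by
  have h0 : pc (zz x y (m + 1) (n + 1)) x =
      (zz x y (m + 1) (n + 1))⁻¹ * (x⁻¹ * zz x y (m + 1) (n + 1) * x) := by
    unfold pc; group
  rw [h0, conj_zz x y hca hz2, zinv x y hca hz2 (zz_mem x y _ _)]
  set z := zz x y (m + 1) (n + 1) with hzdef
  set a := zz x y (m + 1) (n + 2) with hadef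
  set b := zz x y (m + 2) (n + 2) * zz x y (m + 2) (n + 1) with hbdef
  have hzz : z ∈ Zsub x y := zz_mem x y _ _
  have haz : a ∈ Zsub x y := zz_mem x y _ _
  calc z * (a * z * b) = z * (z * a * b) := by
        rw [zcomm x y hca hz2 haz hzz]
    _ = z * z * (a * b) := by group
    _ = a * b := by rw [zmul_self x y hca hz2 hzz, one_mul]

theorem conj_mem_Z {z : G} (hz : z ∈ Zsub x y) : x⁻¹ * z * x ∈ Zsub x y := by
  induction hz using Subgroup.closure_induction with
  | mem g hg =>
    rcases hg with ⟨l, hl, rfl⟩ | ⟨m, n, hm, hn, rfl⟩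
    · obtain ⟨l', rfl⟩ := Nat.exists_eq_add_of_le' hl
      have hconj : x⁻¹ * cc x y (l' + 1) ^ 2 * x =
          (cc x y (l' + 1) * cc x y (l' + 2)) ^ 2 := by
        rw [sq, sq, ← conj_cc x y l']
        group
      rw [hconj]
      have hcomm : zz x y (l' + 2) (l' + 1) * cc x y (l' + 2) =
          cc x y (l' + 2) * zz x y (l' + 2) (l' + 1) :=
        hca _ (zz_mem x y _ _) _ (cc_mem x y _)
      have hab : (cc x y (l' + 1) * cc x y (l' + 2)) ^ 2 =
          cc x y (l' + 1) ^ 2 * cc x y (l' + 2) ^ 2 * zz x y (l' + 2) (l' + 1) := by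
        calc (cc x y (l' + 1) * cc x y (l' + 2)) ^ 2
            = cc x y (l' + 1) ^ 2 * (cc x y (l' + 2) *
                (zz x y (l' + 2) (l' + 1) * cc x y (l' + 2))) := by
              unfold zz pc; rw [sq, sq]; group
          _ = cc x y (l' + 1) ^ 2 * (cc x y (l' + 2) *
                (cc x y (l' + 2) * zz x y (l' + 2) (l' + 1))) := by rw [hcomm]
          _ = cc x y (l' + 1) ^ 2 * cc x y (l' + 2) ^ 2 * zz x y (l' + 2) (l' + 1) := by
              rw [sq (cc x y (l' + 2))]; group
      rw [hab]
      refine mul_mem (mul_mem ?_ ?_) (zz_mem x y _ _) <;>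
        exact Subgroup.subset_closure (Or.inl ⟨_, by omega, rfl⟩)
    · obtain ⟨m', rfl⟩ := Nat.exists_eq_add_of_le' hm
      obtain ⟨n', rfl⟩ := Nat.exists_eq_add_of_le' hn
      rw [conj_zz x y hca hz2]
      exact mul_mem (mul_mem (zz_mem x y _ _) (zz_mem x y _ _))
        (mul_mem (zz_mem x y _ _) (zz_mem x y _ _))
  | one => simpa using (Zsub x y).one_mem
  | mul a b _ _ ha hb =>
    have : x⁻¹ * (a * b) * x = (x⁻¹ * a * x) * (x⁻¹ * b * x) := by group
    rw [this]; exact mul_mem ha hb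
  | inv a _ ha =>
    have : x⁻¹ * a⁻¹ * x = (x⁻¹ * a * x)⁻¹ := by group
    rw [this]; exact inv_mem ha

theorem pc_x_mem {z : G} (hz : z ∈ Zsub x y) : pc z x ∈ Zsub x y := by
  have h0 : pc z x = z⁻¹ * (x⁻¹ * z * x) := by unfold pc; group
  rw [h0]; exact mul_mem (inv_mem hz) (conj_mem_Z x y hca hz2 hz)

theorem itc_mem {z : G} (hz : z ∈ Zsub x y) (r : ℕ) : itc x z r ∈ Zsub x y := by
  induction r with
  | zero => exact hz
  | succ r ih => rw [itc]; exact pc_x_mem x y hca hz2 ih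

theorem pc_mul_x {z w : G} (hz : z ∈ Zsub x y) (hw : w ∈ Zsub x y) :
    pc (z * w) x = pc z x * pc w x := by
  have h1 : w⁻¹ * pc z x * w = pc z x := by
    have := zcomm x y hca hz2 (pc_x_mem x y hca hz2 hz) hw
    rw [mul_assoc, this]; group
  calc pc (z * w) x = w⁻¹ * pc z x * w * pc w x := by unfold pc; group
    _ = pc z x * pc w x := by rw [h1]

theorem itc_mul {z w : G} (hz : z ∈ Zsub x y) (hw : w ∈ Zsub x y) (r : ℕ) :
    itc x (z * w) r = itc x z r * itc x w r := by
  induction r generalizing z w with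
  | zero => rfl
  | succ r ih =>
    rw [itc_succ', itc_succ' x z, itc_succ' x w, pc_mul_x x y hca hz2 hz hw]
    exact ih (pc_x_mem x y hca hz2 hz) (pc_x_mem x y hca hz2 hw)

theorem itc_inv {z : G} (hz : z ∈ Zsub x y) (r : ℕ) :
    itc x z⁻¹ r = (itc x z r)⁻¹ := by
  have h1 : itc x z r * itc x z⁻¹ r = 1 := by
    rw [← itc_mul x y hca hz2 hz (inv_mem hz), mul_inv_cancel, itc_one]
  exact (inv_eq_of_mul_eq_one_right h1).symm

end Part2


section PartPR

variable (x y : G)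
variable (hca : ∀ z ∈ Zsub x y, ∀ h ∈ Hsub x y, z * h = h * z)
variable (hz2 : ∀ z ∈ Zsub x y, z ^ 2 = 1)

set_option linter.unusedSectionVars false

/-- Product of `f 0 * f 1 * ⋯ * f (n-1)`. -/
def PR (f : ℕ → G) (n : ℕ) : G := ((List.range n).map f).prod

theorem PR_zero (f : ℕ → G) : PR f 0 = 1 := rfl

theorem PR_succ (f : ℕ → G) (n : ℕ) : PR f (n + 1) = PR f n * f n := by
  unfold PR
  rw [List.range_succ, List.map_append, List.prod_append]
  simp

theorem PR_congr {f g : ℕ → G} {n : ℕ} (h : ∀ t < n, f t = g t) : PR f n = PR g n := by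
  unfold PR
  congr 1
  apply List.map_congr_left
  intro a ha
  exact h a (List.mem_range.mp ha)

theorem PR_mem (K : Subgroup G) {f : ℕ → G} {n : ℕ} (h : ∀ t < n, f t ∈ K) :
    PR f n ∈ K := by
  induction n with
  | zero => exact K.one_mem
  | succ n ih =>
    rw [PR_succ]
    exact mul_mem (ih fun t ht => h t (by omega)) (h n (by omega))

theorem PR_one (n : ℕ) : PR (fun _ => (1 : G)) n = 1 := by
  induction n with
  | zero => rfl
  | succ n ih => rw [PR_succ, ih, one_mul]

include hca hz2

theorem PR_mul {f g : ℕ → G} (hf : ∀ t, f t ∈ Zsub x y) (hg : ∀ t, g t ∈ Zsub x y)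
    (n : ℕ) : PR (fun t => f t * g t) n = PR f n * PR g n := by
  induction n with
  | zero => simp [PR_zero]
  | succ n ih =>
    rw [PR_succ, PR_succ, PR_succ, ih]
    have hPg : PR g n ∈ Zsub x y := PR_mem (Zsub x y) (fun t _ => hg t)
    have : PR g n * f n = f n * PR g n := zcomm x y hca hz2 hPg (hf n)
    calc PR f n * PR g n * (f n * g n) = PR f n * (PR g n * f n) * g n := by group
      _ = PR f n * (f n * PR g n) * g n := by rw [this]
      _ = PR f n * f n * (PR g n * g n) := by group

omit hca hz2

theorem PR_shift (f : ℕ → G) (n : ℕ) :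
    PR f (n + 1) = f 0 * PR (fun t => f (t + 1)) n := by
  induction n with
  | zero => rw [PR_succ, PR_zero, one_mul, PR_zero, mul_one]
  | succ n ih => rw [PR_succ, ih, PR_succ, mul_assoc]

theorem PR_split (f : ℕ → G) (m r : ℕ) :
    PR f (m + r) = PR f m * PR (fun t => f (m + t)) r := by
  induction r with
  | zero => rw [PR_zero, mul_one, Nat.add_zero]
  | succ r ih => rw [← Nat.add_assoc, PR_succ, ih, PR_succ, mul_assoc]

include hca hz2

theorem symprod : ∀ (n a : ℕ), PR (fun t => zz x y (a + t) (a + n - 1 - t)) n = 1 := by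
  intro n
  induction n using Nat.strong_induction_on with
  | _ n ih =>
    intro a
    match n with
    | 0 => rfl
    | 1 =>
      rw [PR_succ, PR_zero, one_mul]
      rw [show a + 0 = a by omega, show a + 1 - 1 - 0 = a by omega]
      exact zz_diag x y a
    | (n + 2) =>
      rw [PR_succ, PR_shift]
      have hmid : PR (fun t => zz x y (a + (t + 1)) (a + (n + 2) - 1 - (t + 1))) n =
          PR (fun t => zz x y ((a + 1) + t) ((a + 1) + n - 1 - t)) n := by
        apply PR_congr
        intro t ht
        rw [show a + (t + 1) = (a + 1) + t by omega,
          show a + (n + 2) - 1 - (t + 1) = (a + 1) + n - 1 - t by omega]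
      rw [hmid, ih n (by omega) (a + 1), mul_one]
      rw [show a + 0 = a by omega, show a + (n + 2) - 1 - 0 = a + n + 1 by omega,
        show a + (n + 1) = a + n + 1 by omega, show a + (n + 2) - 1 - (n + 1) = a by omega]
      rw [zz_rev x y a (a + n + 1)]
      exact mul_inv_cancel _

end PartPR


section PartPoly

open MvPolynomial Finset

/-- The polynomial ring `GF(2)[u,v]`. -/
abbrev RR : Type := MvPolynomial (Fin 2) (ZMod 2)

noncomputable def uu : RR := X 0
noncomputable def vv : RR := X 1
noncomputable def sP : RR := uu + vv + uu * vv

noncomputable def ApP (n : ℕ) : RR := ∑ t ∈ range n, sP ^ (n - 1 - t) * (uu * vv) ^ t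
noncomputable def BpP (a b n : ℕ) : RR :=
  ∑ l ∈ range n, sP ^ (n - 1 - l) * (uu ^ (a + l) * vv ^ b)
noncomputable def hPP (n : ℕ) : RR := ∑ t ∈ range (n + 1), uu ^ t * vv ^ (n - t)

theorem h2 : (2 : RR) = 0 := by
  have := CharP.cast_eq_zero RR 2
  exact_mod_cast this

theorem sP_def : sP = uu + vv + uu * vv := rfl

theorem sumShift (g : ℕ → RR) (n : ℕ) :
    ∑ t ∈ range (n + 1), sP ^ (n - t) * g t
      = sP * (∑ t ∈ range n, sP ^ (n - 1 - t) * g t) + g n := by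
  rw [sum_range_succ, Nat.sub_self, pow_zero, one_mul, mul_sum]
  congr 1
  apply sum_congr rfl
  intro t ht
  rw [show n - t = (n - 1 - t) + 1 by have := mem_range.mp ht; omega]
  ring

theorem Ap_zero : ApP 0 = 0 := by simp [ApP]

theorem Bp_zero (a b : ℕ) : BpP a b 0 = 0 := by simp [BpP]

theorem hP_zero : hPP 0 = 1 := by simp [hPP]

theorem Ap_succ (n : ℕ) : ApP (n + 1) = sP * ApP n + (uu * vv) ^ n := by
  have h := sumShift (fun t => (uu * vv) ^ t) n
  simpa only [ApP, Nat.add_sub_cancel] using h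

theorem Bp_succ (a b n : ℕ) :
    BpP a b (n + 1) = sP * BpP a b n + uu ^ (a + n) * vv ^ b := by
  have h := sumShift (fun l => uu ^ (a + l) * vv ^ b) n
  simpa only [BpP, Nat.add_sub_cancel] using h

theorem P1 (n i j : ℕ) :
    BpP i (j + 1) n + BpP (i + 1) (j + 1) n =
      ApP n * (uu ^ i * vv ^ (j + 1) + uu ^ (i + 1) * vv ^ j) +
        uu ^ (i + n) * vv ^ j + uu ^ (i + n) * vv ^ (j + n) := by
  induction n with
  | zero =>
    rw [Bp_zero, Bp_zero, Ap_zero]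
    linear_combination (-(uu ^ i * vv ^ j)) * h2
  | succ n ih =>
    rw [Bp_succ, Bp_succ, Ap_succ]
    linear_combination sP * ih + (uu ^ (i + n) * vv ^ j + uu ^ (i + n) * vv ^ (j + n)) * sP_def
      + (uu ^ (i + n) * vv ^ (j + 1) + uu ^ (i + n + 1) * vv ^ (j + 1)) * h2

theorem sum_range_double (g : ℕ → RR) (n : ℕ) :
    ∑ t ∈ range (2 * n), g t = ∑ r ∈ range n, (g (2 * r) + g (2 * r + 1)) := by
  induction n with
  | zero => simp
  | succ n ih =>
    rw [show 2 * (n + 1) = (2 * n) + 1 + 1 by omega, sum_range_succ, sum_range_succ,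
      ih, sum_range_succ]
    rw [add_assoc]

theorem sumSq (g : ℕ → RR) (n : ℕ) :
    (∑ t ∈ range n, g t) ^ 2 = ∑ t ∈ range n, g t ^ 2 := by
  induction n with
  | zero => simp
  | succ n ih =>
    rw [sum_range_succ, sum_range_succ, ← ih]
    linear_combination ((∑ t ∈ range n, g t) * g n) * h2

theorem FrobUV : ∀ k : ℕ, (uu + vv) ^ (2 ^ k) = uu ^ (2 ^ k) + vv ^ (2 ^ k) := by
  intro k
  induction k with
  | zero => norm_num
  | succ k ih =>
    rw [pow_succ 2 k, pow_mul, pow_mul, pow_mul, ih]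
    linear_combination (uu ^ (2 ^ k) * vv ^ (2 ^ k)) * h2

theorem Frob : ∀ k : ℕ, sP ^ (2 ^ k) = uu ^ (2 ^ k) + vv ^ (2 ^ k) + (uu * vv) ^ (2 ^ k) := by
  intro k
  induction k with
  | zero => norm_num [sP_def]
  | succ k ih =>
    rw [pow_succ 2 k, pow_mul, pow_mul, pow_mul, pow_mul, ih]
    linear_combination (uu ^ (2 ^ k) * vv ^ (2 ^ k) + uu ^ (2 ^ k) * (uu * vv) ^ (2 ^ k)
      + vv ^ (2 ^ k) * (uu * vv) ^ (2 ^ k)) * h2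

theorem ApDbl (n : ℕ) :
    ApP (2 * n + 1) = sP ^ (n + 1) * ApP n + (uu * vv) ^ n * (sP * ApP n + (uu * vv) ^ n) := by
  have hsplit : ApP (2 * n + 1) =
      (∑ t ∈ range n, sP ^ (2 * n - t) * (uu * vv) ^ t) +
        ∑ r ∈ range (n + 1), sP ^ (2 * n - (n + r)) * (uu * vv) ^ (n + r) := by
    unfold ApP
    rw [show 2 * n + 1 = n + (n + 1) by omega, sum_range_add]
    congr 1
    · apply sum_congr rfl; intro t ht
      rw [show n + (n + 1) - 1 - t = 2 * n - t by omega]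
    · apply sum_congr rfl; intro r hr
      rw [show n + (n + 1) - 1 - (n + r) = 2 * n - (n + r) by omega]
  rw [hsplit]
  have h1 : ∑ t ∈ range n, sP ^ (2 * n - t) * (uu * vv) ^ t = sP ^ (n + 1) * ApP n := by
    rw [ApP, mul_sum]
    apply sum_congr rfl; intro t ht
    rw [show 2 * n - t = (n + 1) + (n - 1 - t) by have := mem_range.mp ht; omega, pow_add]
    ring
  have h2' : ∑ r ∈ range (n + 1), sP ^ (2 * n - (n + r)) * (uu * vv) ^ (n + r) =
      (uu * vv) ^ n * (sP * ApP n + (uu * vv) ^ n) := by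
    have hss : ∑ r ∈ range (n + 1), sP ^ (n - r) * (uu * vv) ^ r
        = sP * ApP n + (uu * vv) ^ n := by
      have h := sumShift (fun r => (uu * vv) ^ r) n
      rw [ApP]; exact h
    rw [← hss, mul_sum]
    apply sum_congr rfl; intro r hr
    rw [show 2 * n - (n + r) = n - r by omega, pow_add]
    ring
  rw [h1, h2']

theorem hP_succ (n : ℕ) : hPP (n + 1) = vv * hPP n + uu ^ (n + 1) := by
  unfold hPP
  rw [sum_range_succ, Nat.sub_self, pow_zero, mul_one, mul_sum]
  congr 1
  apply sum_congr rfl; intro t ht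
  rw [show n + 1 - t = (n - t) + 1 by have := mem_range.mp ht; omega]
  ring

theorem hTel (n : ℕ) : (uu + vv) * hPP n = uu ^ (n + 1) + vv ^ (n + 1) := by
  induction n with
  | zero => rw [hP_zero]; ring
  | succ n ih =>
    rw [hP_succ]
    linear_combination vv * ih + (vv * uu ^ (n + 1)) * h2

theorem hDbl (n : ℕ) : hPP (2 * n + 1) = (uu + vv) * (hPP n) ^ 2 := by
  have hL : hPP (2 * n + 1) =
      ∑ r ∈ range (n + 1), (uu ^ (2 * r) * vv ^ (2 * (n - r) + 1) +
        uu ^ (2 * r + 1) * vv ^ (2 * (n - r))) := by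
    unfold hPP
    rw [show 2 * n + 1 + 1 = 2 * (n + 1) by omega, sum_range_double]
    apply sum_congr rfl; intro r hr
    have hrn := mem_range.mp hr
    rw [show 2 * n + 1 - 2 * r = 2 * (n - r) + 1 by omega,
      show 2 * n + 1 - (2 * r + 1) = 2 * (n - r) by omega]
  have hR : (uu + vv) * (hPP n) ^ 2 =
      ∑ r ∈ range (n + 1), (uu ^ (2 * r) * vv ^ (2 * (n - r) + 1) +
        uu ^ (2 * r + 1) * vv ^ (2 * (n - r))) := by
    unfold hPP
    rw [sumSq, mul_sum]
    apply sum_congr rfl; intro r hr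
    rw [show (uu ^ r * vv ^ (n - r)) ^ 2 = uu ^ (2 * r) * vv ^ (2 * (n - r)) by
      rw [mul_pow, ← pow_mul, ← pow_mul, Nat.mul_comm r 2, Nat.mul_comm (n - r) 2]]
    ring
  rw [hL, hR]

theorem hFrob : ∀ k : ℕ, hPP (2 ^ k - 1) = (uu + vv) ^ (2 ^ k - 1) := by
  intro k
  induction k with
  | zero => norm_num [hP_zero]
  | succ k ih =>
    have hpow : (1:ℕ) ≤ 2 ^ k := Nat.one_le_two_pow
    rw [show 2 ^ (k + 1) - 1 = 2 * (2 ^ k - 1) + 1 by omega, hDbl, ih]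
    rw [← pow_mul]
    ring

theorem P2s : ∀ k : ℕ, sP * ApP (2 ^ k - 1) = (uu * vv) ^ (2 ^ k - 1) + hPP (2 ^ k - 1) := by
  intro k
  induction k with
  | zero =>
    norm_num [Ap_zero, hP_zero]
    linear_combination -h2
  | succ k ih =>
    have hpow : (1:ℕ) ≤ 2 ^ k := Nat.one_le_two_pow
    set N := 2 ^ k - 1 with hN
    have hQ : N + 1 = 2 ^ k := by omega
    rw [show 2 ^ (k + 1) - 1 = 2 * N + 1 by omega, ApDbl, hDbl]
    have hfrob : sP ^ (N + 1) = uu ^ (N + 1) + vv ^ (N + 1) + (uu * vv) ^ (N + 1) := by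
      rw [hQ]; exact Frob k
    have htel := hTel N
    linear_combination (sP ^ (N + 1) + sP * (uu ^ N * vv ^ N)) * ih +
      (uu ^ N * vv ^ N + hPP N) * hfrob +
      ((uu ^ N * vv ^ N) - hPP N) * htel +
      (uu ^ N * vv ^ N * hPP N) * sP_def +
      (uu ^ (2 * N + 1) * vv ^ N + uu ^ N * vv ^ (2 * N + 1) +
        uu ^ (N + 1) * vv ^ (N + 1) * hPP N + sP * (uu ^ (2 * N) * vv ^ (2 * N))) * h2

theorem tail_eq (i n : ℕ) :
    ∑ t ∈ range n, uu ^ (i + t) * vv ^ (n - t) = uu ^ i * hPP n - uu ^ (i + n) := by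
  unfold hPP
  rw [sum_range_succ, Nat.sub_self, pow_zero, mul_one, mul_add, mul_sum]
  rw [← pow_add]
  rw [add_sub_cancel_right]
  apply sum_congr rfl; intro t ht
  rw [pow_add, mul_assoc]

theorem P2 (k i : ℕ) :
    BpP i 1 (2 ^ k - 1) + BpP (i + 1) 1 (2 ^ k - 1) =
      ApP (2 ^ k - 1) * (uu ^ (i + 1) * vv) +
        ∑ t ∈ range (2 ^ k - 1), uu ^ (i + t) * vv ^ (2 ^ k - 1 - t) := by
  set N := 2 ^ k - 1 with hN
  have hp1 := P1 N i 0
  have hp2 := P2s k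
  have ht := tail_eq i N
  rw [ht]
  linear_combination hp1 + uu ^ i * hp2 + (ApP N * uu ^ i) * sP_def +
    (uu ^ (i + N) * vv ^ N) * h2 +
    (ApP N * uu ^ (i + 1) + ApP N * uu ^ i * vv - ApP N * uu ^ i * sP + uu ^ (i + N)) * h2

end PartPoly


section PartPsi

open MvPolynomial Finset

variable (x y : G)

/-- The commutative group structure on `Z`. -/
noncomputable def cgZ (hca : ∀ z ∈ Zsub x y, ∀ h ∈ Hsub x y, z * h = h * z)
    (hz2 : ∀ z ∈ Zsub x y, z ^ 2 = 1) : CommGroup ↥(Zsub x y) :=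
  { (inferInstance : Group ↥(Zsub x y)) with
    mul_comm := fun a b => Subtype.ext (zcomm x y hca hz2 a.2 b.2) }

noncomputable def zzZ (d : Fin 2 →₀ ℕ) : ↥(Zsub x y) :=
  ⟨zz x y (d 0) (d 1), zz_mem x y _ _⟩

noncomputable def psi (hca : ∀ z ∈ Zsub x y, ∀ h ∈ Hsub x y, z * h = h * z)
    (hz2 : ∀ z ∈ Zsub x y, z ^ 2 = 1) (p : RR) : G :=
  (@Finsupp.prod (Fin 2 →₀ ℕ) (ZMod 2) (↥(Zsub x y)) _
    (@CommGroup.toCommMonoid _ (cgZ x y hca hz2)) (AddMonoidAlgebra.coeff p) (fun d e => zzZ x y d ^ e.val)).val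

variable (hca : ∀ z ∈ Zsub x y, ∀ h ∈ Hsub x y, z * h = h * z)
variable (hz2 : ∀ z ∈ Zsub x y, z ^ 2 = 1)

set_option linter.unusedSectionVars false

theorem uv_mono (a b : ℕ) :
    (uu ^ a * vv ^ b : RR) = monomial (Finsupp.single 0 a + Finsupp.single 1 b) 1 := by
  rw [uu, vv, X_pow_eq_monomial, X_pow_eq_monomial, monomial_mul, one_mul]

theorem ee_app0 (a b : ℕ) :
    ((Finsupp.single (0 : Fin 2) a + Finsupp.single (1 : Fin 2) b : (Fin 2) →₀ ℕ)) 0 = a := by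
  rw [Finsupp.add_apply]
  simp [Finsupp.single_apply]

theorem ee_app1 (a b : ℕ) :
    ((Finsupp.single (0 : Fin 2) a + Finsupp.single (1 : Fin 2) b : (Fin 2) →₀ ℕ)) 1 = b := by
  rw [Finsupp.add_apply]
  simp [Finsupp.single_apply, show (0 : Fin 2) ≠ 1 by decide]

include hca hz2

theorem psi_mem (p : RR) : psi x y hca hz2 p ∈ Zsub x y :=
  (@Finsupp.prod (Fin 2 →₀ ℕ) (ZMod 2) (↥(Zsub x y)) _
    (@CommGroup.toCommMonoid _ (cgZ x y hca hz2)) (AddMonoidAlgebra.coeff p) (fun d e => zzZ x y d ^ e.val)).2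

theorem psi_zero : psi x y hca hz2 0 = 1 := by
  have key := @Finsupp.prod_zero_index (Fin 2 →₀ ℕ) (ZMod 2) (↥(Zsub x y)) _
    (@CommGroup.toCommMonoid _ (cgZ x y hca hz2)) (fun d e => zzZ x y d ^ e.val)
  exact congrArg Subtype.val key

theorem psi_add (p q : RR) :
    psi x y hca hz2 (p + q) = psi x y hca hz2 p * psi x y hca hz2 q := by
  have hsq : ∀ d : Fin 2 →₀ ℕ, zzZ x y d * zzZ x y d = 1 :=
    fun d => Subtype.ext (zmul_self x y hca hz2 (zzZ x y d).2)
  have hcases : ∀ b : ZMod 2, b = 0 ∨ b = 1 := by decide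
  have key := @Finsupp.prod_add_index' (Fin 2 →₀ ℕ) (ZMod 2) (↥(Zsub x y)) _
    (@CommGroup.toCommMonoid _ (cgZ x y hca hz2)) (AddMonoidAlgebra.coeff p) (AddMonoidAlgebra.coeff q) (fun d e => zzZ x y d ^ e.val)
    (fun d => by norm_num; rfl)
    (fun d b1 b2 => by
      rcases hcases b1 with rfl | rfl <;> rcases hcases b2 with rfl | rfl
      · norm_num; exact (mul_one _).symm
      · norm_num; exact (one_mul _).symm
      · norm_num; exact (mul_one _).symm
      · show zzZ x y d ^ (1 + 1 : ZMod 2).val = zzZ x y d ^ (1 : ZMod 2).val *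
          zzZ x y d ^ (1 : ZMod 2).val
        rw [show ((1 + 1 : ZMod 2)).val = 0 by decide, show ((1 : ZMod 2)).val = 1 by decide]
        rw [pow_zero, pow_one, hsq])
  exact congrArg Subtype.val key

theorem psi_monomial (d : Fin 2 →₀ ℕ) :
    psi x y hca hz2 (monomial d 1) = zz x y (d 0) (d 1) := by
  have key := @Finsupp.prod_single_index (Fin 2 →₀ ℕ) (ZMod 2) (↥(Zsub x y)) _
    (@CommGroup.toCommMonoid _ (cgZ x y hca hz2)) d 1 (fun d e => zzZ x y d ^ e.val)
    (by norm_num; rfl)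
  have : psi x y hca hz2 (monomial d 1) = (zzZ x y d ^ (1 : ZMod 2).val).val :=
    congrArg Subtype.val key
  rw [this, show ((1 : ZMod 2)).val = 1 by decide, pow_one]
  rfl

theorem psi_uv (a b : ℕ) : psi x y hca hz2 (uu ^ a * vv ^ b) = zz x y a b := by
  rw [uv_mono, psi_monomial x y hca hz2, ee_app0, ee_app1]

theorem pc_psi_mono (d : Fin 2 →₀ ℕ) (c : ZMod 2) (hd0 : 1 ≤ d 0) (hd1 : 1 ≤ d 1) :
    pc (psi x y hca hz2 (monomial d c)) x = psi x y hca hz2 (sP * monomial d c) := by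
  have hcases : ∀ b : ZMod 2, b = 0 ∨ b = 1 := by decide
  rcases hcases c with rfl | rfl
  · rw [monomial_zero]
    rw [mul_zero]
    rw [psi_zero x y hca hz2]
    rw [pc_one_left x]
  · obtain ⟨m, hm⟩ := Nat.exists_eq_add_of_le' hd0
    obtain ⟨n, hn⟩ := Nat.exists_eq_add_of_le' hd1
    have hX0 : (uu : RR) = monomial (Finsupp.single 0 1) 1 := by
      rw [uu, ← X_pow_eq_monomial, pow_one]
    have hX1 : (vv : RR) = monomial (Finsupp.single 1 1) 1 := by
      rw [vv, ← X_pow_eq_monomial, pow_one]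
    have hXX : (uu * vv : RR) = monomial (Finsupp.single 0 1 + Finsupp.single 1 1) 1 := by
      rw [hX0, hX1, monomial_mul, one_mul]
    have hsplit : sP * monomial d 1 =
        monomial (Finsupp.single 0 1 + d) 1 + monomial (Finsupp.single 1 1 + d) 1 +
          monomial ((Finsupp.single 0 1 + Finsupp.single 1 1) + d) 1 := by
      rw [sP_def, add_mul, add_mul, hXX, hX0, hX1, monomial_mul, monomial_mul, monomial_mul]
      norm_num
    rw [hsplit, psi_add x y hca hz2, psi_add x y hca hz2, psi_monomial x y hca hz2,
      psi_monomial x y hca hz2, psi_monomial x y hca hz2, psi_monomial x y hca hz2]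
    simp only [Finsupp.add_apply, Finsupp.single_apply, show (0 : Fin 2) ≠ 1 by decide,
      show (1 : Fin 2) ≠ 0 by decide, if_true, if_false, if_pos rfl, if_neg, zero_add,
      add_zero, hm, hn]
    rw [pc_zz_x x y hca hz2 m n]
    -- goal: zz (m+1) (n+2) * (zz (m+2) (n+2) * zz (m+2) (n+1))
    --     = zz (m+2) (n+1) * zz (m+1) (n+2) * zz (m+2) (n+2)
    have c1 : zz x y (m + 2) (n + 1) * zz x y (m + 1) (n + 2) =
        zz x y (m + 1) (n + 2) * zz x y (m + 2) (n + 1) :=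
      zcomm x y hca hz2 (zz_mem x y _ _) (zz_mem x y _ _)
    have c2 : zz x y (m + 2) (n + 2) * zz x y (m + 2) (n + 1) =
        zz x y (m + 2) (n + 1) * zz x y (m + 2) (n + 2) :=
      zcomm x y hca hz2 (zz_mem x y _ _) (zz_mem x y _ _)
    rw [c2, ← mul_assoc, ← c1,
      show 1 + (m + 1) = m + 2 by omega, show 1 + (n + 1) = n + 2 by omega]

/-- positivity of exponents -/
def PosP (p : RR) : Prop := ∀ d ∈ p.support, 1 ≤ d 0 ∧ 1 ≤ d 1

theorem pc_psi_sum (S : Finset (Fin 2 →₀ ℕ)) (c : (Fin 2 →₀ ℕ) → ZMod 2)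
    (hpos : ∀ d ∈ S, 1 ≤ d 0 ∧ 1 ≤ d 1) :
    pc (psi x y hca hz2 (∑ d ∈ S, monomial d (c d))) x =
      psi x y hca hz2 (sP * ∑ d ∈ S, monomial d (c d)) := by
  classical
  induction S using Finset.induction_on with
  | empty =>
    rw [sum_empty]
    rw [mul_zero]
    rw [psi_zero x y hca hz2]
    rw [pc_one_left x]
  | insert a S ha ih =>
    rw [sum_insert ha, psi_add x y hca hz2,
      pc_mul_x x y hca hz2 (psi_mem x y hca hz2 _) (psi_mem x y hca hz2 _),
      mul_add, psi_add x y hca hz2,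
      pc_psi_mono x y hca hz2 a (c a) (hpos a (mem_insert_self a S)).1
        (hpos a (mem_insert_self a S)).2,
      ih (fun d hd => hpos d (mem_insert_of_mem hd))]

theorem pc_psi (p : RR) (hpos : PosP p) :
    pc (psi x y hca hz2 p) x = psi x y hca hz2 (sP * p) := by
  have h := pc_psi_sum x y hca hz2 p.support (fun d => coeff d p) hpos
  rwa [← as_sum p] at h

theorem PosP_mul_sP {p : RR} (hpos : PosP p) : PosP (sP * p) := by
  intro d hd
  have hsub := MvPolynomial.support_mul sP p hd
  rw [Finset.mem_add] at hsub
  obtain ⟨d1, hd1, d2, hd2, rfl⟩ := hsub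
  have := hpos d2 hd2
  constructor <;> (rw [Finsupp.add_apply]; omega)

theorem itc_psi (p : RR) (hpos : PosP p) (r : ℕ) :
    itc x (psi x y hca hz2 p) r = psi x y hca hz2 (sP ^ r * p) := by
  induction r generalizing p with
  | zero => rw [pow_zero, one_mul]; rfl
  | succ r ih =>
    rw [itc_succ', pc_psi x y hca hz2 p hpos, ih _ (PosP_mul_sP x y hca hz2 hpos)]
    congr 1
    ring

theorem PosP_uv {a b : ℕ} (ha : 1 ≤ a) (hb : 1 ≤ b) : PosP ((uu ^ a * vv ^ b : RR)) := by
  intro d hd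
  rw [uv_mono] at hd
  rw [support_monomial] at hd
  rw [if_neg (by norm_num : (1 : ZMod 2) ≠ 0)] at hd
  rw [Finset.mem_singleton] at hd
  subst hd
  rw [ee_app0, ee_app1]
  exact ⟨ha, hb⟩

theorem psi_sum_itc (e f g : ℕ → ℕ) (n : ℕ) (hf : ∀ t < n, 1 ≤ f t) (hg : ∀ t < n, 1 ≤ g t) :
    psi x y hca hz2 (∑ t ∈ range n, sP ^ e t * (uu ^ f t * vv ^ g t)) =
      PR (fun t => itc x (zz x y (f t) (g t)) (e t)) n := by
  induction n with
  | zero => rw [sum_range_zero, psi_zero x y hca hz2, PR_zero]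
  | succ n ih =>
    rw [sum_range_succ, psi_add x y hca hz2, PR_succ,
      ih (fun t ht => hf t (by omega)) (fun t ht => hg t (by omega)),
      ← itc_psi x y hca hz2 _ (PosP_uv x y hca hz2 (hf n (by omega)) (hg n (by omega))),
      psi_uv x y hca hz2]

end PartPsi


section PartFinal

open MvPolynomial Finset

variable (x y : G)
variable (hca : ∀ z ∈ Zsub x y, ∀ h ∈ Hsub x y, z * h = h * z)
variable (hz2 : ∀ z ∈ Zsub x y, z ^ 2 = 1)

set_option linter.unusedSectionVars false

theorem mem_ww (i j k : ℕ) (hi : 1 ≤ i) (hj : 1 ≤ j) : ww x y i j k ∈ Lsub x y k :=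
  Subgroup.subset_normalClosure (Or.inl ⟨i, j, hi, hj, rfl⟩)

theorem mem_zz_L (m n k : ℕ) (hm : 2 ^ k ≤ m) (hn : 1 ≤ n) : zz x y m n ∈ Lsub x y k :=
  Subgroup.subset_normalClosure (Or.inr ⟨m, n, hm, hn, rfl⟩)

theorem ww_eq (i j k : ℕ) :
    ww x y i j k =
      PR (fun t => itc x (zz x y ((i + 1) + t) (j + t)) ((2 ^ k - 1) - 1 - t)) (2 ^ k - 1) := by
  apply PR_congr
  intro t ht
  rw [show i + t + 1 = (i + 1) + t by omega, show 2 ^ k - 2 - t = (2 ^ k - 1) - 1 - t by omega]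

include hca hz2

theorem psi_Ap (a b n : ℕ) (ha : 1 ≤ a) (hb : 1 ≤ b) :
    psi x y hca hz2 (ApP n * (uu ^ a * vv ^ b)) =
      PR (fun t => itc x (zz x y (a + t) (b + t)) (n - 1 - t)) n := by
  have hpoly : ApP n * (uu ^ a * vv ^ b) =
      ∑ t ∈ range n, sP ^ (n - 1 - t) * (uu ^ (a + t) * vv ^ (b + t)) := by
    rw [ApP, sum_mul]
    apply sum_congr rfl; intro t ht
    rw [pow_add, pow_add]; ring
  rw [hpoly]
  exact psi_sum_itc x y hca hz2 _ _ _ n (fun t _ => by omega) (fun t _ => by omega)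

theorem psi_Ap_ww (a b k : ℕ) (hb : 1 ≤ b) :
    psi x y hca hz2 (ApP (2 ^ k - 1) * (uu ^ (a + 1) * vv ^ b)) = ww x y a b k := by
  rw [psi_Ap x y hca hz2 (a + 1) b _ (by omega) hb, ww_eq x y a b k]

theorem Wg_pair (a b n : ℕ) :
    PR (fun t => itc x (zz x y (a + t) (b + t)) (n - 1 - t)) n *
      PR (fun t => itc x (zz x y (b + t) (a + t)) (n - 1 - t)) n = 1 := by
  rw [← PR_mul x y hca hz2 (fun t => itc_mem x y hca hz2 (zz_mem x y _ _) _)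
    (fun t => itc_mem x y hca hz2 (zz_mem x y _ _) _)]
  have h1 : PR (fun t => itc x (zz x y (a + t) (b + t)) (n - 1 - t) *
      itc x (zz x y (b + t) (a + t)) (n - 1 - t)) n = PR (fun _ => (1 : G)) n := by
    apply PR_congr
    intro t ht
    rw [zz_rev x y (a + t) (b + t), itc_inv x y hca hz2 (zz_mem x y _ _), mul_inv_cancel]
  rw [h1, PR_one]

theorem psi_Ap_one (b k : ℕ) :
    psi x y hca hz2 (ApP (2 ^ k - 1) * (uu ^ 1 * vv ^ (b + 1))) =
      (ww x y b 1 k)⁻¹ := by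
  rw [psi_Ap x y hca hz2 1 (b + 1) _ (by omega) (by omega), ww_eq x y b 1 k]
  exact eq_inv_of_mul_eq_one_left (Wg_pair x y hca hz2 1 (b + 1) (2 ^ k - 1))

theorem tail_mem (i k : ℕ) (hi : 1 ≤ i) :
    PR (fun t => zz x y (i + t) (2 ^ k - 1 - t)) (2 ^ k - 1) ∈ Lsub x y k := by
  set N := 2 ^ k - 1 with hN
  have h2k : 1 ≤ 2 ^ k := Nat.one_le_two_pow
  set m := N + 1 - i with hm
  obtain ⟨r, hr⟩ : ∃ r, N = m + r := ⟨N - m, by omega⟩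
  rw [hr, PR_split]
  apply mul_mem
  · have h1 : PR (fun t => zz x y (i + t) (m + r - t)) m =
        PR (fun t => zz x y (i + t) (i + m - 1 - t)) m := by
      apply PR_congr
      intro t ht
      rw [show m + r - t = i + m - 1 - t by omega]
    rw [h1, symprod x y hca hz2 m i]
    exact (Lsub x y k).one_mem
  · apply PR_mem
    intro t ht
    apply mem_zz_L
    · omega
    · omega

theorem psi_tail (i k : ℕ) (hi : 1 ≤ i) :
    psi x y hca hz2 (∑ t ∈ range (2 ^ k - 1), uu ^ (i + t) * vv ^ (2 ^ k - 1 - t)) =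
      PR (fun t => zz x y (i + t) (2 ^ k - 1 - t)) (2 ^ k - 1) := by
  have hpoly : (∑ t ∈ range (2 ^ k - 1), uu ^ (i + t) * vv ^ (2 ^ k - 1 - t) : RR) =
      ∑ t ∈ range (2 ^ k - 1), sP ^ (0 : ℕ) * (uu ^ (i + t) * vv ^ (2 ^ k - 1 - t)) := by
    apply sum_congr rfl; intro t ht
    rw [pow_zero, one_mul]
  rw [hpoly]
  exact psi_sum_itc x y hca hz2 (fun _ => 0) _ _ _ (fun t _ => by omega)
    (fun t ht => by omega)

theorem zeta_eq' (i j k : ℕ) (hi : 1 ≤ i) (hj : 1 ≤ j) :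
    ((List.range (2 ^ k - 1)).map
      (fun l => itc x (pc (itc x (x⁻¹ * cc x y i * x) l) (cc x y j)) (2 ^ k - 2 - l))).prod =
      psi x y hca hz2 (BpP i j (2 ^ k - 1) + BpP (i + 1) j (2 ^ k - 1)) := by
  obtain ⟨i', rfl⟩ := Nat.exists_eq_add_of_le' hi
  set N := 2 ^ k - 1 with hN
  have hterm : ∀ l < N,
      itc x (pc (itc x (x⁻¹ * cc x y (i' + 1) * x) l) (cc x y j)) (2 ^ k - 2 - l) =
        itc x (zz x y (i' + 1 + l) j) (N - 1 - l) *
          itc x (zz x y (i' + 1 + l + 1) j) (N - 1 - l) := by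
    intro l hl
    have hc : itc x (x⁻¹ * cc x y (i' + 1) * x) l =
        cc x y (i' + 1 + l) * cc x y (i' + 1 + l + 1) := by
      rw [itc_conj, itc_cc, show i' + 1 + l = (i' + l) + 1 by omega, conj_cc,
        show i' + l + 2 = (i' + l) + 1 + 1 by omega]
    rw [hc]
    have hpc : pc (cc x y (i' + 1 + l) * cc x y (i' + 1 + l + 1)) (cc x y j) =
        zz x y (i' + 1 + l) j * zz x y (i' + 1 + l + 1) j :=
      pc_mul_left x y hca hz2 (zz_mem x y _ _) (cc_mem x y _)
    rw [hpc, show 2 ^ k - 2 - l = N - 1 - l by omega]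
    exact itc_mul x y hca hz2 (zz_mem x y _ _) (zz_mem x y _ _) _
  have hPR : ((List.range N).map
      (fun l => itc x (pc (itc x (x⁻¹ * cc x y (i' + 1) * x) l) (cc x y j)) (2 ^ k - 2 - l))).prod
      = PR (fun l => itc x (zz x y (i' + 1 + l) j) (N - 1 - l) *
          itc x (zz x y (i' + 1 + l + 1) j) (N - 1 - l)) N := PR_congr hterm
  rw [hPR, PR_mul x y hca hz2 (fun t => itc_mem x y hca hz2 (zz_mem x y _ _) _)
    (fun t => itc_mem x y hca hz2 (zz_mem x y _ _) _)]
  rw [psi_add x y hca hz2]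
  congr 1
  · rw [BpP, psi_sum_itc x y hca hz2 _ _ _ N (fun t _ => by omega) (fun t _ => by omega)]
  · rw [BpP, psi_sum_itc x y hca hz2 _ _ _ N (fun t _ => by omega) (fun t _ => by omega)]
    apply PR_congr
    intro t ht
    rw [show i' + 1 + t + 1 = i' + 1 + 1 + t by omega]

end PartFinal


theorem zeta_mem_Lk (x y : G)
    (hca : ∀ z ∈ Zsub x y, ∀ h ∈ Hsub x y, z * h = h * z)
    (hz2 : ∀ z ∈ Zsub x y, z ^ 2 = 1)
    (k : ℕ) (hk : 1 ≤ k) (i j : ℕ) (hi : 1 ≤ i) (hj : 1 ≤ j) :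
    zeta x k (cc x y i) (cc x y j) ∈ Lsub x y k := by
  have h2k : 1 ≤ 2 ^ k := Nat.one_le_two_pow
  have hzeq : zeta x k (cc x y i) (cc x y j) =
      psi x y hca hz2 (BpP i j (2 ^ k - 1) + BpP (i + 1) j (2 ^ k - 1)) := by
    unfold zeta
    exact zeta_eq' x y hca hz2 i j k hi hj
  rw [hzeq]
  obtain ⟨j', rfl⟩ := Nat.exists_eq_add_of_le' hj
  rcases Nat.eq_zero_or_pos j' with rfl | hj'
  · -- the case j = 1
    rw [show (0 : ℕ) + 1 = 1 from rfl]
    rw [congrArg (psi x y hca hz2) (P2 k i)]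
    rw [psi_add x y hca hz2]
    apply mul_mem
    · rw [show (ApP (2 ^ k - 1) * (uu ^ (i + 1) * vv) : RR)
          = ApP (2 ^ k - 1) * (uu ^ (i + 1) * vv ^ 1) by rw [pow_one]]
      rw [psi_Ap_ww x y hca hz2 i 1 k (le_refl 1)]
      exact mem_ww x y i 1 k hi (le_refl 1)
    · rw [psi_tail x y hca hz2 i k hi]
      exact tail_mem x y hca hz2 i k hi
  · -- the case j = j' + 1 with j' ≥ 1
    have hsplit := P1 (2 ^ k - 1) i j'
    rw [congrArg (psi x y hca hz2) hsplit]
    rw [show (ApP (2 ^ k - 1) * (uu ^ i * vv ^ (j' + 1) + uu ^ (i + 1) * vv ^ j') : RR)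
        = ApP (2 ^ k - 1) * (uu ^ i * vv ^ (j' + 1)) + ApP (2 ^ k - 1) * (uu ^ (i + 1) * vv ^ j')
        from mul_add _ _ _]
    rw [psi_add x y hca hz2, psi_add x y hca hz2, psi_add x y hca hz2]
    refine mul_mem (mul_mem (mul_mem ?_ ?_) ?_) ?_
    · rcases Nat.lt_or_ge i 2 with hi2 | hi2
      · have hi1 : i = 1 := by omega
        subst hi1
        rw [show (uu ^ 1 * vv ^ (j' + 1) : RR) = uu ^ 1 * vv ^ (j' + 1) from rfl]
        rw [psi_Ap_one x y hca hz2 j' k]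
        exact inv_mem (mem_ww x y j' 1 k hj' (le_refl 1))
      · obtain ⟨i'', rfl⟩ : ∃ i'', i = i'' + 1 + 1 := ⟨i - 2, by omega⟩
        rw [psi_Ap_ww x y hca hz2 (i'' + 1) (j' + 1) k (by omega)]
        exact mem_ww x y (i'' + 1) (j' + 1) k (by omega) (by omega)
    · rw [psi_Ap_ww x y hca hz2 i j' k hj']
      exact mem_ww x y i j' k hi hj'
    · rw [psi_uv x y hca hz2]
      exact mem_zz_L x y _ _ k (by omega) hj'
    · rw [psi_uv x y hca hz2]
      exact mem_zz_L x y _ _ k (by omega) (by omega)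


end Paper
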